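/- Given POVM decoding operators {E_m} (0 ≤ E_m, ∑_m E_m ≤ 𝟙) and encodings satisfying 𝒟 ∘ ℰ_m = 𝒟, if the average success probability (1/M)∑_m tr(ℰ_m(ρ) E_m) ≥ 1 − ε, then the test Q = ∑_m |m⟩⟨m| ⊗ E_m applied to ζ = (1/M)∑_m |m⟩⟨m| ⊗ 𝒟(ρ) yields tr(Qζ) = 1/M, and consequently log M ≤ D_H^ε(τ ‖ ζ) where τ = (1/M)∑_m |m⟩⟨m| ⊗ ℰ_m(ρ). -/

import Mathlib

open Matrix
open scoped ComplexOrder ENNReal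

/-- Hypothesis testing relative entropy
`D_H^ε(ρ‖σ) = -log inf{tr(Qσ) : 0 ≤ Q ≤ 𝟙, tr(Qρ) ≥ 1-ε}` (valued in `EReal`,
so that an empty/vanishing infimum yields `+∞`). -/
noncomputable def DH {n : Type*} [Fintype n] [DecidableEq n] (ε : ℝ)
    (ρ σ : Matrix n n ℂ) : EReal :=
  - ENNReal.log (sInf {x : ℝ≥0∞ | ∃ Q : Matrix n n ℂ, Q.PosSemidef ∧
      (1 - Q).PosSemidef ∧ 1 - ε ≤ ((Q * ρ).trace).re ∧
      x = ENNReal.ofReal ((Q * σ).trace).re})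

lemma psd_sum {n : Type*} [Fintype n] [DecidableEq n] {ι : Type*} (s : Finset ι)
    (A : ι → Matrix n n ℂ) (h : ∀ i ∈ s, (A i).PosSemidef) :
    (∑ i ∈ s, A i).PosSemidef := by
  classical
  induction s using Finset.induction with
  | empty => simpa using Matrix.PosSemidef.zero
  | insert _ _ hx ih =>
    rename_i a s
    rw [Finset.sum_insert hx]
    exact (h a (Finset.mem_insert_self a s)).add (ih fun i hi => h i (Finset.mem_insert_of_mem hi))

lemma blk_trace {M d : ℕ} (A B : Fin M → Matrix (Fin d) (Fin d) ℂ) :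
    ((Matrix.of fun p q : Fin M × Fin d => if p.1 = q.1 then A p.1 p.2 q.2 else 0) *
     (Matrix.of fun p q : Fin M × Fin d => if p.1 = q.1 then B p.1 p.2 q.2 else 0)).trace
      = ∑ m, (A m * B m).trace := by
  simp [Matrix.trace, Matrix.diag, Matrix.mul_apply, Fintype.sum_prod_type,
    ite_mul, mul_ite, Finset.sum_ite_irrel, Finset.sum_ite_eq, Finset.sum_ite_eq']

lemma blk_psd {M d : ℕ} (A : Fin M → Matrix (Fin d) (Fin d) ℂ)
    (h : ∀ m, (A m).PosSemidef) :
    (Matrix.of fun p q : Fin M × Fin d =>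
      if p.1 = q.1 then A p.1 p.2 q.2 else 0).PosSemidef := by
  rw [Matrix.posSemidef_iff_dotProduct_mulVec]
  constructor
  · ext ⟨m, i⟩ ⟨m', j⟩
    simp only [Matrix.conjTranspose_apply, Matrix.of_apply]
    by_cases hmm : m = m'
    · subst hmm
      simp only [if_pos rfl]
      have := (h m).1
      calc star (A m j i) = (A m)ᴴ i j := rfl
        _ = A m i j := by rw [this]
    · simp [hmm, Ne.symm hmm]
  · intro x
    have key : star x ⬝ᵥ (Matrix.of fun p q : Fin M × Fin d =>
        if p.1 = q.1 then A p.1 p.2 q.2 else 0).mulVec x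
        = ∑ m, star (fun i => x (m, i)) ⬝ᵥ (A m).mulVec (fun i => x (m, i)) := by
      simp [dotProduct, Matrix.mulVec, Fintype.sum_prod_type, ite_mul, mul_ite,
        Finset.mul_sum, Finset.sum_ite_irrel, Finset.sum_ite_eq, Finset.sum_ite_eq']
    rw [key]
    exact Finset.sum_nonneg fun m _ => (h m).dotProduct_mulVec_nonneg _

/-- converse bound. Given a POVM decoder `{E_m}` and encodings with
`𝒟 ∘ ℰ_m = 𝒟`, an average success probability `≥ 1-ε` forces
`tr(Qζ) = 1/M` for the block test `Q = ∑_m |m⟩⟨m| ⊗ E_m` and hence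
`log M ≤ D_H^ε(τ‖ζ)`. -/
theorem converse_bound {M d : ℕ} (hM : 0 < M) (ε : ℝ)
    (ℰ : Fin M → Matrix (Fin d) (Fin d) ℂ → Matrix (Fin d) (Fin d) ℂ)
    (𝒟 : Matrix (Fin d) (Fin d) ℂ → Matrix (Fin d) (Fin d) ℂ)
    (hDE : ∀ m, 𝒟 ∘ ℰ m = 𝒟)
    (ρ : Matrix (Fin d) (Fin d) ℂ) (hρ : ρ.PosSemidef) (htr : ρ.trace = 1)
    (h𝒟tr : (𝒟 ρ).trace = 1)
    (E : Fin M → Matrix (Fin d) (Fin d) ℂ)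
    (hEpos : ∀ m, (E m).PosSemidef)
    (hEsum : ∑ m, E m = 1)
    (hsucc : 1 - ε ≤ (M : ℝ)⁻¹ * ∑ m, (((ℰ m ρ) * E m).trace).re) :
    let Q : Matrix (Fin M × Fin d) (Fin M × Fin d) ℂ :=
      Matrix.of fun p q => if p.1 = q.1 then E p.1 p.2 q.2 else 0
    let τ : Matrix (Fin M × Fin d) (Fin M × Fin d) ℂ :=
      ((M : ℂ))⁻¹ • Matrix.of fun p q => if p.1 = q.1 then ℰ p.1 ρ p.2 q.2 else 0
    let ζ : Matrix (Fin M × Fin d) (Fin M × Fin d) ℂ :=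
      ((M : ℂ))⁻¹ • Matrix.of fun p q => if p.1 = q.1 then 𝒟 ρ p.2 q.2 else 0
    (Q * ζ).trace = ((M : ℂ))⁻¹ ∧ (Real.log M : EReal) ≤ DH ε τ ζ := by
  intro Q τ ζ
  have hMC : (M : ℂ) ≠ 0 := Nat.cast_ne_zero.mpr hM.ne'
  have hMR : (0:ℝ) < (M : ℝ)⁻¹ := by positivity
  -- trace of Q * ζ
  have hQζ : (Q * ζ).trace = ((M : ℂ))⁻¹ := by
    show (Q * (((M : ℂ))⁻¹ • _)).trace = _
    rw [Matrix.mul_smul, Matrix.trace_smul, blk_trace E (fun _ => 𝒟 ρ)]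
    rw [← Matrix.trace_sum, ← Finset.sum_mul, hEsum, one_mul, h𝒟tr]
    simp
  refine ⟨hQζ, ?_⟩
  -- trace of Q * τ
  have hQτ : 1 - ε ≤ ((Q * τ).trace).re := by
    have : (Q * τ).trace = ((M : ℂ))⁻¹ * ∑ m, (ℰ m ρ * E m).trace := by
      show (Q * (((M : ℂ))⁻¹ • _)).trace = _
      rw [Matrix.mul_smul, Matrix.trace_smul, blk_trace E (fun m => ℰ m ρ)]
      rw [smul_eq_mul]
      congr 1
      exact Finset.sum_congr rfl fun m _ => Matrix.trace_mul_comm _ _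
    rw [this]
    have hcast : ((M : ℂ))⁻¹ = (((M : ℝ)⁻¹ : ℝ) : ℂ) := by push_cast; ring
    rw [hcast, Complex.re_ofReal_mul, Complex.re_sum]
    exact hsucc
  -- membership in the DH set
  have hmem : ENNReal.ofReal ((M : ℝ)⁻¹) ∈
      {x : ℝ≥0∞ | ∃ Q' : Matrix (Fin M × Fin d) (Fin M × Fin d) ℂ, Q'.PosSemidef ∧
        (1 - Q').PosSemidef ∧ 1 - ε ≤ ((Q' * τ).trace).re ∧
        x = ENNReal.ofReal ((Q' * ζ).trace).re} := by
    refine ⟨Q, blk_psd E hEpos, ?_, hQτ, ?_⟩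
    · have hone : (1 - Q) = Matrix.of fun p q : Fin M × Fin d =>
          if p.1 = q.1 then (1 - E p.1) p.2 q.2 else 0 := by
        ext ⟨m, i⟩ ⟨m', j⟩
        by_cases hmm : m = m'
        · subst hmm
          simp [Q, Matrix.sub_apply, Matrix.one_apply, Prod.ext_iff]
        · simp [Q, Matrix.sub_apply, Matrix.one_apply, Prod.ext_iff, hmm]
      rw [hone]
      refine blk_psd (fun m => 1 - E m) fun m => ?_
      have h1 : 1 - E m = ∑ m' ∈ Finset.univ.erase m, E m' := by
        have h2 := Finset.add_sum_erase Finset.univ E (Finset.mem_univ m)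
        rw [hEsum] at h2
        exact sub_eq_of_eq_add' h2.symm
      show (1 - E m).PosSemidef
      rw [h1]
      exact psd_sum _ _ fun m' _ => hEpos m'
    · have hcast2 : ((M : ℂ))⁻¹ = (((M : ℝ)⁻¹ : ℝ) : ℂ) := by push_cast; ring
      rw [hQζ, hcast2, Complex.ofReal_re]
  -- conclude
  show (Real.log M : EReal) ≤ - ENNReal.log (sInf _)
  have h1 := ENNReal.log_monotone (sInf_le hmem)
  rw [ENNReal.log_ofReal_of_pos hMR, Real.log_inv] at h1
  calc (Real.log M : EReal) = -((- Real.log M : ℝ) : EReal) := by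
        rw [EReal.coe_neg, neg_neg]
    _ ≤ - ENNReal.log (sInf _) := by
        apply EReal.neg_le_neg_iff.mpr h1
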